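/- λ_min[(L^k)_{S^c}]^{1/k} ≤ ω(S) for all k ≥ 1, i.e., any nonzero signal g supported on S^c (g_S = 0) has bandwidth ω(g) ≥ (λ_min[(L^k)_{S^c}])^{1/k}. -/

import Mathlib

open Matrix

section helper

variable {n : Type*} [Fintype n] [DecidableEq n]

lemma rayleigh_lower_bound (M : Matrix n n ℝ) (hM : M.IsHermitian) (c : ℝ)
    (hlb : ∀ μ : ℝ, (∃ v : n → ℝ, v ≠ 0 ∧ M *ᵥ v = μ • v) → c ≤ μ)
    (v : n → ℝ) : c * (v ⬝ᵥ v) ≤ v ⬝ᵥ (M *ᵥ v) := by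
  set U : Matrix n n ℝ := (hM.eigenvectorUnitary : Matrix n n ℝ) with hU
  have hspec := hM.spectral_theorem
  have hofReal : (RCLike.ofReal ∘ hM.eigenvalues : n → ℝ) = hM.eigenvalues := by
    ext i; simp [RCLike.ofReal]
  have heigc : ∀ i, c ≤ hM.eigenvalues i := by
    intro i
    apply hlb
    refine ⟨⇑(hM.eigenvectorBasis i), ?_, hM.mulVec_eigenvectorBasis i⟩
    intro h
    have : (hM.eigenvectorBasis i : EuclideanSpace ℝ n) = 0 := by
      ext j; exact congrFun h j
    exact hM.eigenvectorBasis.toBasis.ne_zero i (by simpa using this)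
  set w : n → ℝ := star U *ᵥ v with hw
  have hstarU : star U = Uᵀ := by
    rw [Matrix.star_eq_conjTranspose]; ext i j; simp [Matrix.conjTranspose_apply]
  have hdot : ∀ y : n → ℝ, v ⬝ᵥ (U *ᵥ y) = w ⬝ᵥ y := by
    intro y
    rw [Matrix.dotProduct_mulVec, hw, hstarU, Matrix.mulVec_transpose]
  have hMv : M *ᵥ v = U *ᵥ (Matrix.diagonal hM.eigenvalues *ᵥ w) := by
    conv_lhs => rw [hspec]
    rw [hofReal, Unitary.conjStarAlgAut_apply, ← Matrix.mulVec_mulVec, ← Matrix.mulVec_mulVec]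
  have hquad : v ⬝ᵥ (M *ᵥ v) = ∑ i, hM.eigenvalues i * w i ^ 2 := by
    rw [hMv, hdot]
    simp only [dotProduct, Matrix.mulVec_diagonal]
    congr 1; ext i; ring
  have hUstar : U * star U = 1 := by
    rw [hU, ← Unitary.coe_star]
    exact Unitary.coe_mul_star_self _
  have hnorm : v ⬝ᵥ v = ∑ i, w i ^ 2 := by
    have : w ⬝ᵥ w = v ⬝ᵥ (U *ᵥ w) := (hdot w).symm
    rw [hw, Matrix.mulVec_mulVec, hUstar, Matrix.one_mulVec] at this
    rw [← this]
    simp only [dotProduct]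
    congr 1; ext i; ring
  rw [hquad, hnorm, Finset.mul_sum]
  apply Finset.sum_le_sum
  intro i _
  exact mul_le_mul_of_nonneg_right (heigc i) (sq_nonneg _)

end helper

/-- Any nonzero signal `g` supported on `Sᶜ` (i.e. `g_S = 0`) has bandwidth
`ω(g) ≥ (λ_min[(L^k)_{Sᶜ}])^{1/k}`: some eigenvector `u i` with
`lam i ≥ (λ_min[(L^k)_{Sᶜ}])^{1/k}` has nonzero GFT coefficient `u i ⬝ᵥ g`.
Hence `Ω_k(S) = (λ_min[(L^k)_{Sᶜ}])^{1/k} ≤ ω(S)`. -/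
theorem cutoff_estimate_le_bandwidth {N : ℕ}
    (L : Matrix (Fin N) (Fin N) ℝ) (hL : L.PosSemidef)
    (u : Fin N → Fin N → ℝ) (lam : Fin N → ℝ)
    (hortho : ∀ i j, u i ⬝ᵥ u j = if i = j then (1 : ℝ) else 0)
    (heig : ∀ i, L *ᵥ u i = lam i • u i)
    (S : Finset (Fin N)) (k : ℕ) (hk : 1 ≤ k) (lmin : ℝ)
    (hlmin : IsLeast {μ : ℝ | ∃ v : {x // x ∉ S} → ℝ, v ≠ 0 ∧
      ((L ^ k).submatrix (fun i : {x // x ∉ S} => (i : Fin N))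
        (fun i : {x // x ∉ S} => (i : Fin N))) *ᵥ v = μ • v} lmin)
    (g : Fin N → ℝ) (hg : g ≠ 0) (hgS : ∀ i ∈ S, g i = 0) :
    ∃ i, u i ⬝ᵥ g ≠ 0 ∧ lmin ^ ((1 : ℝ) / k) ≤ lam i := by
  classical
  -- U has rows u i
  set U : Matrix (Fin N) (Fin N) ℝ := Matrix.of u with hUdef
  have hUUt : U * Uᵀ = 1 := by
    ext i j
    simpa [Matrix.mul_apply, Matrix.one_apply, dotProduct, hUdef] using hortho i j
  have hUtU : Uᵀ * U = 1 := mul_eq_one_comm.mp hUUt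
  set D : Matrix (Fin N) (Fin N) ℝ := Matrix.diagonal lam with hDdef
  have hLUt : L * Uᵀ = Uᵀ * D := by
    ext j i
    have := congrFun (heig i) j
    simp only [Matrix.mulVec, dotProduct, Pi.smul_apply, smul_eq_mul] at this
    simp [Matrix.mul_apply, hDdef, Matrix.diagonal_apply, Matrix.mul_apply,
      Finset.mul_sum, hUdef]
    simpa [mul_comm] using this
  have hLdecomp : ∀ m : ℕ, L ^ m = Uᵀ * D ^ m * U := by
    intro m
    induction m with
    | zero => simp [hUtU]
    | succ m ih =>
      have hLeq : L = Uᵀ * D * U := by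
        calc L = L * (Uᵀ * U) := by rw [hUtU, Matrix.mul_one]
        _ = (L * Uᵀ) * U := by rw [Matrix.mul_assoc]
        _ = Uᵀ * D * U := by rw [hLUt]
      calc L ^ (m + 1) = L ^ m * L := pow_succ L m
      _ = (Uᵀ * D ^ m * U) * (Uᵀ * D * U) := by rw [ih, hLeq]
      _ = Uᵀ * D ^ m * (U * Uᵀ) * D * U := by noncomm_ring
      _ = Uᵀ * D ^ (m + 1) * U := by rw [hUUt]; noncomm_ring [pow_succ]
  -- GFT coefficients
  set c : Fin N → ℝ := U *ᵥ g with hc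
  have hci : ∀ i, c i = u i ⬝ᵥ g := fun i => rfl
  have hgrec : Uᵀ *ᵥ c = g := by
    rw [hc, Matrix.mulVec_mulVec, hUtU, Matrix.one_mulVec]
  -- quadratic form of L^k in terms of coefficients
  have hquad : g ⬝ᵥ (L ^ k *ᵥ g) = ∑ i, lam i ^ k * c i ^ 2 := by
    rw [hLdecomp k, ← Matrix.mulVec_mulVec, ← Matrix.mulVec_mulVec, ← hc,
      Matrix.dotProduct_mulVec, Matrix.vecMul_transpose, ← hc]
    rw [hDdef, Matrix.diagonal_pow]
    simp only [dotProduct, Matrix.mulVec_diagonal, Pi.pow_apply]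
    congr 1; ext i; ring
  -- restriction to the complement
  set M : Matrix {x // x ∉ S} {x // x ∉ S} ℝ :=
    (L ^ k).submatrix (fun i : {x // x ∉ S} => (i : Fin N))
      (fun i : {x // x ∉ S} => (i : Fin N)) with hM
  set v : {x // x ∉ S} → ℝ := fun i => g i with hv
  have hsum_subtype : ∀ f : Fin N → ℝ, (∀ i ∈ S, f i = 0) →
      ∑ i : {x // x ∉ S}, f (i : Fin N) = ∑ i, f i := by
    intro f hf
    rw [← Finset.sum_subtype Sᶜ (fun x => Finset.mem_compl) f]
    rw [← Finset.sum_compl_add_sum S f]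
    rw [Finset.sum_eq_zero hf, add_zero]
  have hrestrict : v ⬝ᵥ (M *ᵥ v) = g ⬝ᵥ (L ^ k *ᵥ g) := by
    simp only [dotProduct, Matrix.mulVec, hM, hv, Matrix.submatrix_apply]
    rw [← hsum_subtype (fun i => g i * ∑ j, (L ^ k) i j * g j) ?_]
    · congr 1; ext i
      congr 1
      rw [← hsum_subtype (fun j => (L ^ k) (i : Fin N) j * g j) ?_]
      intro j hj; simp [hgS j hj]
    · intro i hi; simp [hgS i hi]
  have hnormeq : v ⬝ᵥ v = g ⬝ᵥ g := by
    simp only [dotProduct, hv]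
    exact hsum_subtype (fun i => g i * g i) (fun i hi => by simp [hgS i hi])
  -- M is hermitian and PSD
  have hLk : (L ^ k).PosSemidef := hL.pow k
  have hMpsd : M.PosSemidef := hLk.submatrix _
  -- lmin is nonneg
  have hlmin0 : 0 ≤ lmin := by
    obtain ⟨v₀, hv₀, hev⟩ := hlmin.1
    have h1 : 0 ≤ v₀ ⬝ᵥ (M *ᵥ v₀) := by simpa using hMpsd.dotProduct_mulVec_nonneg v₀
    rw [hev] at h1
    have h2 : v₀ ⬝ᵥ (lmin • v₀) = lmin * (v₀ ⬝ᵥ v₀) := by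
      simp [dotProduct, Finset.mul_sum]; congr 1; ext i; ring
    rw [h2] at h1
    have h3 : 0 < v₀ ⬝ᵥ v₀ := by
      have h0 : 0 ≤ v₀ ⬝ᵥ v₀ := Finset.sum_nonneg fun i _ => mul_self_nonneg _
      have hne : v₀ ⬝ᵥ v₀ ≠ 0 := fun h => hv₀ (dotProduct_self_eq_zero.mp h)
      exact lt_of_le_of_ne h0 (Ne.symm hne)
    nlinarith [h1, h3]
  -- Rayleigh lower bound
  have hray : lmin * (g ⬝ᵥ g) ≤ g ⬝ᵥ (L ^ k *ᵥ g) := by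
    rw [← hnormeq, ← hrestrict]
    exact rayleigh_lower_bound M hMpsd.1 lmin (fun μ hμ => hlmin.2 hμ) v
  -- coefficients are not all zero, pick max eigenvalue among nonzero ones
  have hcne : ∃ i, c i ≠ 0 := by
    by_contra h
    push_neg at h
    apply hg
    rw [← hgrec]
    have : c = 0 := funext h
    rw [this, Matrix.mulVec_zero]
  set T : Finset (Fin N) := Finset.univ.filter (fun i => c i ≠ 0) with hT
  have hTne : T.Nonempty := by
    obtain ⟨i, hi⟩ := hcne
    exact ⟨i, by simp [hT, hi]⟩
  obtain ⟨i₀, hi₀T, hi₀max⟩ := Finset.exists_max_image T lam hTne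
  have hi₀c : c i₀ ≠ 0 := (Finset.mem_filter.mp hi₀T).2
  have hlam0 : ∀ i, 0 ≤ lam i := by
    intro i
    have h1 : 0 ≤ u i ⬝ᵥ (L *ᵥ u i) := by simpa using hL.dotProduct_mulVec_nonneg (u i)
    rw [heig i] at h1
    have h2 : u i ⬝ᵥ (lam i • u i) = lam i * (u i ⬝ᵥ u i) := by
      simp [dotProduct, Finset.mul_sum]; congr 1; ext j; ring
    rw [h2, hortho i i, if_pos rfl, mul_one] at h1
    exact h1
  -- upper bound by max eigenvalue
  have hupper : g ⬝ᵥ (L ^ k *ᵥ g) ≤ lam i₀ ^ k * (g ⬝ᵥ g) := by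
    rw [hquad]
    have hgg : g ⬝ᵥ g = ∑ i, c i ^ 2 := by
      have : c ⬝ᵥ c = g ⬝ᵥ g := by
        calc c ⬝ᵥ c = (g ᵥ* Uᵀ) ⬝ᵥ c := by rw [Matrix.vecMul_transpose, ← hc]
        _ = g ⬝ᵥ (Uᵀ *ᵥ c) := (Matrix.dotProduct_mulVec _ _ _).symm
        _ = g ⬝ᵥ g := by rw [hgrec]
      rw [← this]
      simp only [dotProduct]; congr 1; ext i; ring
    rw [hgg, Finset.mul_sum]
    apply Finset.sum_le_sum
    intro i _
    by_cases hci0 : c i = 0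
    · simp [hci0]
    · have hiT : i ∈ T := by simp [hT, hci0]
      have : lam i ≤ lam i₀ := hi₀max i hiT
      have hpow : lam i ^ k ≤ lam i₀ ^ k := pow_le_pow_left₀ (hlam0 i) this k
      exact mul_le_mul_of_nonneg_right hpow (sq_nonneg _)
  have hgg0 : 0 < g ⬝ᵥ g := by
    have h0 : 0 ≤ g ⬝ᵥ g := Finset.sum_nonneg fun i _ => mul_self_nonneg _
    have hne : g ⬝ᵥ g ≠ 0 := fun h => hg (dotProduct_self_eq_zero.mp h)
    exact lt_of_le_of_ne h0 (Ne.symm hne)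
  have hkey : lmin ≤ lam i₀ ^ k := by
    have := hray.trans hupper
    exact le_of_mul_le_mul_right this hgg0
  refine ⟨i₀, by rw [← hci]; exact hi₀c, ?_⟩
  have hkne : (k : ℝ) ≠ 0 := Nat.cast_ne_zero.mpr (by omega)
  calc lmin ^ ((1 : ℝ) / k) ≤ (lam i₀ ^ k) ^ ((1 : ℝ) / k) :=
        Real.rpow_le_rpow hlmin0 hkey (by positivity)
  _ = lam i₀ := by
      rw [← Real.rpow_natCast (lam i₀) k, ← Real.rpow_mul (hlam0 i₀)]
      rw [mul_one_div, div_self hkne, Real.rpow_one]
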